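/- arXiv:2302.02229 — 7 statements merged into one kernel-verified Lean document; each statement's English description precedes it below -/
import Mathlib

section
/- For all positive integers m: ∑_{i=1}^m H_{m+i}/i = H_m² + (1/2)·H²_m, where H_n = ∑_{k=1}^n 1/k and H²_n = ∑_{k=1}^n 1/k². -/
open Finset

noncomputable def H (n : ℕ) : ℝ := ∑ k ∈ Finset.range n, 1 / ((k : ℝ) + 1)
noncomputable def H2 (n : ℕ) : ℝ := ∑ k ∈ Finset.range n, 1 / ((k : ℝ) + 1) ^ 2

lemma Hsucc (n : ℕ) : H (n + 1) = H n + 1 / ((n : ℝ) + 1) := by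
  simp [H, Finset.sum_range_succ]

lemma H2succ (n : ℕ) : H2 (n + 1) = H2 n + 1 / ((n : ℝ) + 1) ^ 2 := by
  simp [H2, Finset.sum_range_succ]

lemma shiftsum (c m : ℕ) :
    ∑ i ∈ Finset.Icc 1 m, 1 / ((c : ℝ) + i) = H (c + m) - H c := by
  induction m with
  | zero => simp
  | succ m ih =>
    rw [Finset.sum_Icc_succ_top (by omega), ih,
      show c + (m + 1) = (c + m) + 1 from rfl, Hsucc]
    push_cast
    ring

theorem stmt4 (m : ℕ) (hm : 0 < m) :
    ∑ i ∈ Finset.Icc 1 m, H (m + i) / (i : ℝ) = (H m) ^ 2 + (1 / 2) * H2 m := by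
  clear hm
  induction m with
  | zero => simp [H, H2]
  | succ m ih =>
    have hm1 : (0:ℝ) < (m:ℝ) + 1 := by positivity
    have key : ∀ i ∈ Finset.Icc 1 m, H (m + 1 + i) / (i : ℝ) =
        H (m + i) / (i : ℝ) +
          (1 / ((m:ℝ) + 1)) * (1 / (i:ℝ) - 1 / ((m:ℝ) + 1 + i)) := by
      intro i hi
      have hi1 : 1 ≤ i := (Finset.mem_Icc.mp hi).1
      have hipos : (0:ℝ) < (i:ℝ) := by exact_mod_cast Nat.pos_of_ne_zero (by omega)
      have hH : H (m + 1 + i) = H (m + i) + 1 / ((m:ℝ) + (i:ℝ) + 1) := by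
        rw [show m + 1 + i = (m + i) + 1 by omega, Hsucc]
        push_cast; ring_nf
      rw [hH]
      have h2 : (0:ℝ) < (m:ℝ) + 1 + i := by positivity
      field_simp
      ring
    rw [Finset.sum_Icc_succ_top (by omega), Finset.sum_congr rfl key]
    rw [Finset.sum_add_distrib, ← Finset.mul_sum, Finset.sum_sub_distrib]
    have e1 : ∑ i ∈ Finset.Icc 1 m, 1 / (i:ℝ) = H m := by
      have := shiftsum 0 m
      simp [H] at this ⊢
      simpa using this
    have e2 : ∑ i ∈ Finset.Icc 1 m, 1 / ((m:ℝ) + 1 + i) = H (2*m+1) - H (m+1) := by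
      have := shiftsum (m+1) m
      rw [show m + 1 + m = 2*m+1 by omega] at this
      rw [← this]
      apply Finset.sum_congr rfl
      intro i _
      push_cast; ring_nf
    rw [e1, e2, ih]
    have h21 : H (m + 1 + (m + 1)) = H (2*m+1) + 1 / (2*(m:ℝ) + 2) := by
      rw [show m + 1 + (m + 1) = (2*m+1) + 1 by omega, Hsucc]
      push_cast; ring_nf
    rw [h21, Hsucc m, H2succ, Nat.cast_succ]
    field_simp
    ring
end

section
/- For positive integers m < n: ∑_{i=1}^m (n−i)!/((m−i)!·i²) = (n!/m!)·( ∑_{i=1}^m H_{i+n-m-1}/i + (1/2)·(H²_n − H²_{n−m}) − (1/2)·(H_n² − H_{n−m}²) + H_{n−m−1}·(H_n − H_{n−m} − H_m) ), where H_k = ∑ 1/j and H²_k = ∑ 1/j². -/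
set_option maxHeartbeats 1000000
open Finset
lemma H_succ (n : ℕ) : H (n+1) = H n + 1/((n:ℝ)+1) := by
  simp [H, Finset.sum_range_succ]
lemma H2_succ (n : ℕ) : H2 (n+1) = H2 n + 1/((n:ℝ)+1)^2 := by
  simp [H2, Finset.sum_range_succ]
lemma H_zero : H 0 = 0 := by simp [H]
lemma H2_zero : H2 0 = 0 := by simp [H2]

lemma H_one : H 1 = 1 := by simp [H]
lemma H2_one : H2 1 = 1 := by simp [H2]
lemma facpos (k : ℕ) : (0:ℝ) < (Nat.factorial k : ℝ) := by
  exact_mod_cast Nat.factorial_pos k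

lemma lemE (m : ℕ) : ∑ i ∈ range m, H (i+1)/((i:ℝ)+1) = ((H m)^2 + H2 m)/2 := by
  induction m with
  | zero => simp [H_zero, H2_zero]
  | succ m ih =>
    rw [Finset.sum_range_succ, ih, H_succ, H2_succ]
    have : ((m:ℝ)+1) ≠ 0 := by positivity
    field_simp
    ring

lemma lemD (b m : ℕ) : ∑ i ∈ range m, 1/(((i:ℝ)+1) * ((i:ℝ)+(b:ℝ)+2))
    = (H m + H (b+1) - H (m+b+1))/((b:ℝ)+1) := by
  induction m with
  | zero => simp [H_zero]
  | succ m ih =>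
    rw [Finset.sum_range_succ, ih]
    have h1 : (m+1+b+1 : ℕ) = (m+b)+1+1 := by ring
    have h2 : (m+b+1 : ℕ) = (m+b)+1 := rfl
    rw [h1, h2]
    simp only [H_succ]
    have key : 1/(((m:ℝ)+1) * ((m:ℝ)+(b:ℝ)+2))
        = (1/((m:ℝ)+1) - 1/((m:ℝ)+(b:ℝ)+1+1))/((b:ℝ)+1) := by
      have hb : ((b:ℝ)+1) ≠ 0 := by positivity
      have hm : ((m:ℝ)+1) ≠ 0 := by positivity
      have hmb : ((m:ℝ)+(b:ℝ)+1+1) ≠ 0 := by positivity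
      field_simp
      ring
    rw [key]
    push_cast
    ring

lemma lemS0 (b m : ℕ) :
    ∑ i ∈ range (m+1), ((Nat.factorial (m+1+b-i)) : ℝ)/((Nat.factorial (m-i)) : ℝ)
      = ((Nat.factorial (m+b+2)) : ℝ)/(((Nat.factorial m) : ℝ) * ((b:ℝ)+2)) := by
  induction m with
  | zero =>
    rw [Finset.sum_range_one]
    simp only [Nat.sub_zero, Nat.factorial_zero]
    rw [show (0+1+b : ℕ) = b+1 from by ring, show (0+b+2 : ℕ) = (b+1)+1 from by ring,
      Nat.factorial_succ (b+1)]
    have := facpos (b+1)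
    push_cast
    field_simp
    ring
  | succ m ih =>
    rw [Finset.sum_range_succ']
    have e1 : ∀ i : ℕ, m+1+1+b-(i+1) = m+1+b-i := fun i => by omega
    have e2 : ∀ i : ℕ, m+1-(i+1) = m-i := fun i => by omega
    simp only [e1, e2, Nat.sub_zero]
    rw [ih]
    rw [show (m+1+1+b : ℕ) = m+b+2 from by ring, show (m+1+b+2 : ℕ) = (m+b+2)+1 from by ring,
      Nat.factorial_succ (m+b+2), Nat.factorial_succ m]
    have h1 := facpos m
    have h2 : ((m:ℝ)+1) ≠ 0 := by positivity
    have h3 : ((b:ℝ)+2) ≠ 0 := by positivity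
    have h4 := facpos (m+b+2)
    push_cast
    field_simp
    ring

lemma lemS1 (m b : ℕ) :
    ∑ i ∈ range m, ((Nat.factorial (m+b-i)) : ℝ)/(((Nat.factorial (m-1-i)) : ℝ) * ((i:ℝ)+1))
      = ((Nat.factorial (m+b+1)) : ℝ)/((Nat.factorial m) : ℝ) * (H (m+b+1) - H (b+1)) := by
  induction b with
  | zero =>
    have step : ∀ i ∈ range m,
        ((Nat.factorial (m+0-i)) : ℝ)/(((Nat.factorial (m-1-i)) : ℝ) * ((i:ℝ)+1))
          = ((m:ℝ)+1) * (1/((i:ℝ)+1)) - 1 := by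
      intro i hi
      have hi' : i < m := Finset.mem_range.mp hi
      rw [show (m+0-i : ℕ) = (m-1-i)+1 from by omega, Nat.factorial_succ]
      have hc : ((m-1-i : ℕ) : ℝ) = (m:ℝ)-1-(i:ℝ) := by
        rw [Nat.cast_sub (by omega), Nat.cast_sub (by omega)]; norm_num
      have h1 : ((i:ℝ)+1) ≠ 0 := by positivity
      have h2 := facpos (m-1-i)
      push_cast [hc]
      field_simp
      ring
    rw [Finset.sum_congr rfl step, Finset.sum_sub_distrib, ← Finset.mul_sum]
    simp only [Finset.sum_const, Finset.card_range, nsmul_eq_mul, mul_one]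
    rw [show (m+0+1 : ℕ) = m+1 from by ring, H_succ, Nat.factorial_succ,
      show (0+1 : ℕ) = 1 from rfl, H_one]
    have h1 : ((m:ℝ)+1) ≠ 0 := by positivity
    have h2 := facpos m
    have hH : ∑ i ∈ range m, 1/((i:ℝ)+1) = H m := rfl
    rw [hH]
    push_cast
    field_simp
    ring
  | succ b ih =>
    rcases m with _ | m'
    · simp
    have step : ∀ i ∈ range (m'+1),
        ((Nat.factorial (m'+1+(b+1)-i)) : ℝ)/(((Nat.factorial (m'+1-1-i)) : ℝ) * ((i:ℝ)+1))
          = ((m':ℝ)+(b:ℝ)+3) * (((Nat.factorial (m'+1+b-i)) : ℝ)/(((Nat.factorial (m'+1-1-i)) : ℝ) * ((i:ℝ)+1)))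
            - ((Nat.factorial (m'+1+b-i)) : ℝ)/((Nat.factorial (m'-i)) : ℝ) := by
      intro i hi
      have hi' : i < m'+1 := Finset.mem_range.mp hi
      rw [show (m'+1+(b+1)-i : ℕ) = (m'+1+b-i)+1 from by omega, Nat.factorial_succ]
      have hc : ((m'+1+b-i : ℕ) : ℝ) = (m':ℝ)+1+(b:ℝ)-(i:ℝ) := by
        rw [Nat.cast_sub (by omega)]; push_cast; ring
      rw [show (m'-i : ℕ) = m'+1-1-i from by omega]
      have h1 : ((i:ℝ)+1) ≠ 0 := by positivity
      have h2 := facpos (m'+1-1-i)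
      push_cast [hc]
      field_simp
      ring
    rw [Finset.sum_congr rfl step, Finset.sum_sub_distrib, ← Finset.mul_sum, ih]
    have s0 := lemS0 b m'
    have es0 : ∀ i : ℕ, (m'+1-1-i : ℕ) = m'-i := fun i => by omega
    simp only [es0] at *
    rw [s0]
    simp only [show (m'+1+(b+1)+1 : ℕ) = m'+b+1+1+1 from by ring,
      show (m'+1+b+1 : ℕ) = m'+b+1+1 from by ring,
      show (m'+b+2 : ℕ) = m'+b+1+1 from by ring,
      show (m'+1+b : ℕ) = m'+b+1 from by ring,
      show (m'+1 : ℕ) = m'+1 from rfl]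
    simp only [Nat.factorial_succ, H_succ]
    have h1 : ((m':ℝ)+1) ≠ 0 := by positivity
    have h2 := facpos m'
    have h3 := facpos (m'+b)
    have h4 : ((b:ℝ)+2) ≠ 0 := by positivity
    have h5 : ((b:ℝ)+1) ≠ 0 := by positivity
    have h6 : ((m':ℝ)+(b:ℝ)+1) ≠ 0 := by positivity
    have h7 : ((m':ℝ)+(b:ℝ)+2) ≠ 0 := by positivity
    have h8 : ((m':ℝ)+(b:ℝ)+3) ≠ 0 := by positivity
    push_cast
    field_simp
    ring


lemma lemMain (m b : ℕ) :
    ∑ i ∈ range m, ((Nat.factorial (m+b-i)) : ℝ)/(((Nat.factorial (m-1-i)) : ℝ) * ((i:ℝ)+1)^2)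
      = ((Nat.factorial (m+b+1)) : ℝ)/((Nat.factorial m) : ℝ)
        * ((∑ i ∈ range m, H (i+b+1)/((i:ℝ)+1))
            + (1/2) * (H2 (m+b+1) - H2 (b+1))
            - (1/2) * ((H (m+b+1))^2 - (H (b+1))^2)
            + H b * (H (m+b+1) - H (b+1) - H m)) := by
  induction b with
  | zero =>
    have step : ∀ i ∈ range m,
        ((Nat.factorial (m+0-i)) : ℝ)/(((Nat.factorial (m-1-i)) : ℝ) * ((i:ℝ)+1)^2)
          = ((m:ℝ)+1) * (1/((i:ℝ)+1)^2) - 1/((i:ℝ)+1) := by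
      intro i hi
      have hi' : i < m := Finset.mem_range.mp hi
      rw [show (m+0-i : ℕ) = (m-1-i)+1 from by omega, Nat.factorial_succ]
      have hc : ((m-1-i : ℕ) : ℝ) = (m:ℝ)-1-(i:ℝ) := by
        rw [Nat.cast_sub (by omega), Nat.cast_sub (by omega)]; norm_num
      have h1 : ((i:ℝ)+1) ≠ 0 := by positivity
      have h2 := facpos (m-1-i)
      push_cast [hc]
      field_simp
      ring
    rw [Finset.sum_congr rfl step, Finset.sum_sub_distrib, ← Finset.mul_sum]
    have hH : ∑ i ∈ range m, 1/((i:ℝ)+1) = H m := rfl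
    have hH2 : ∑ i ∈ range m, 1/((i:ℝ)+1)^2 = H2 m := rfl
    have hE : ∑ i ∈ range m, H (i+0+1)/((i:ℝ)+1) = ((H m)^2 + H2 m)/2 := by
      simp only [Nat.add_zero]
      exact lemE m
    rw [hH, hH2, hE]
    rw [show (m+0+1 : ℕ) = m+1 from by ring, Nat.factorial_succ, H_succ, H2_succ,
      show (0+1 : ℕ) = 1 from rfl, H_one, H2_one, H_zero]
    have h1 : ((m:ℝ)+1) ≠ 0 := by positivity
    have h2 := facpos m
    push_cast
    field_simp
    ring
  | succ b ih =>
    rcases m with _ | m'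
    · simp [H_zero]
    have step : ∀ i ∈ range (m'+1),
        ((Nat.factorial (m'+1+(b+1)-i)) : ℝ)/(((Nat.factorial (m'+1-1-i)) : ℝ) * ((i:ℝ)+1)^2)
          = ((m':ℝ)+(b:ℝ)+3) * (((Nat.factorial (m'+1+b-i)) : ℝ)/(((Nat.factorial (m'+1-1-i)) : ℝ) * ((i:ℝ)+1)^2))
            - ((Nat.factorial (m'+1+b-i)) : ℝ)/(((Nat.factorial (m'+1-1-i)) : ℝ) * ((i:ℝ)+1)) := by
      intro i hi
      have hi' : i < m'+1 := Finset.mem_range.mp hi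
      rw [show (m'+1+(b+1)-i : ℕ) = (m'+1+b-i)+1 from by omega, Nat.factorial_succ]
      have hc : ((m'+1+b-i : ℕ) : ℝ) = (m':ℝ)+1+(b:ℝ)-(i:ℝ) := by
        rw [Nat.cast_sub (by omega)]; push_cast; ring
      have h1 : ((i:ℝ)+1) ≠ 0 := by positivity
      have h2 := facpos (m'+1-1-i)
      push_cast [hc]
      field_simp
      ring
    rw [Finset.sum_congr rfl step, Finset.sum_sub_distrib, ← Finset.mul_sum, ih,
      lemS1 (m'+1) b]
    have hsig : ∑ i ∈ range (m'+1), H (i+(b+1)+1)/((i:ℝ)+1)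
        = (∑ i ∈ range (m'+1), H (i+b+1)/((i:ℝ)+1))
          + (H (m'+1) + H (b+1) - H (m'+1+b+1))/((b:ℝ)+1) := by
      rw [← lemD b (m'+1), ← Finset.sum_add_distrib]
      refine Finset.sum_congr rfl fun i hi => ?_
      rw [show (i+(b+1)+1 : ℕ) = (i+b+1)+1 from by ring, H_succ]
      push_cast
      have h1 : ((i:ℝ)+1) ≠ 0 := by positivity
      have h2 : ((i:ℝ)+(b:ℝ)+2) ≠ 0 := by positivity
      field_simp
      ring
    have hrec : (∑ i ∈ range (m'+1), H (i+(b+1)+1)/((i:ℝ)+1))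
            + (1/2) * (H2 (m'+1+(b+1)+1) - H2 ((b+1)+1))
            - (1/2) * ((H (m'+1+(b+1)+1))^2 - (H ((b+1)+1))^2)
            + H (b+1) * (H (m'+1+(b+1)+1) - H ((b+1)+1) - H (m'+1))
        = ((∑ i ∈ range (m'+1), H (i+b+1)/((i:ℝ)+1))
            + (1/2) * (H2 (m'+1+b+1) - H2 (b+1))
            - (1/2) * ((H (m'+1+b+1))^2 - (H (b+1))^2)
            + H b * (H (m'+1+b+1) - H (b+1) - H (m'+1)))
          - (H (m'+1+b+1) - H (b+1))/((m':ℝ)+(b:ℝ)+3) := by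
      rw [hsig]
      simp only [show (m'+1+(b+1)+1 : ℕ) = m'+b+1+1+1 from by ring,
        show (m'+1+b+1 : ℕ) = m'+b+1+1 from by ring,
        show ((b+1)+1 : ℕ) = b+1+1 from rfl]
      simp only [H_succ, H2_succ]
      push_cast
      simp only [one_div, ← inv_pow]
      ring
    rw [hrec]
    have hfac : ((Nat.factorial (m'+1+(b+1)+1)) : ℝ)
        = ((m':ℝ)+(b:ℝ)+3) * ((Nat.factorial (m'+1+b+1)) : ℝ) := by
      rw [show (m'+1+(b+1)+1 : ℕ) = (m'+1+b+1)+1 from by ring, Nat.factorial_succ]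
      push_cast [Nat.cast_mul]
      ring
    rw [hfac]
    have hX := facpos (m'+1+b+1)
    have hG := facpos (m'+1)
    generalize ((∑ i ∈ range (m'+1), H (i+b+1)/((i:ℝ)+1))
            + (1/2) * (H2 (m'+1+b+1) - H2 (b+1))
            - (1/2) * ((H (m'+1+b+1))^2 - (H (b+1))^2)
            + H b * (H (m'+1+b+1) - H (b+1) - H (m'+1))) = P
    generalize H (m'+1+b+1) - H (b+1) = Q
    generalize hXX : ((Nat.factorial (m'+1+b+1)) : ℝ) = X at *
    generalize hGG : ((Nat.factorial (m'+1)) : ℝ) = G at *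
    have hX' : X ≠ 0 := ne_of_gt hX
    have hG' : G ≠ 0 := ne_of_gt hG
    have hc : ((m':ℝ)+(b:ℝ)+3) ≠ 0 := by positivity
    have h1 : ((m':ℝ)+1) ≠ 0 := by positivity
    push_cast
    field_simp


theorem stmt9 (m n : ℕ) (hm : 0 < m) (hmn : m < n) :
    ∑ i ∈ Finset.Icc 1 m, ((Nat.factorial (n - i)) : ℝ) / (((Nat.factorial (m - i)) : ℝ) * (i : ℝ) ^ 2)
      = (((Nat.factorial n) : ℝ) / ((Nat.factorial m) : ℝ))
        * ((∑ i ∈ Finset.Icc 1 m, H (i + (n - m) - 1) / (i : ℝ))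
            + (1 / 2) * (H2 n - H2 (n - m))
            - (1 / 2) * ((H n) ^ 2 - (H (n - m)) ^ 2)
            + H (n - m - 1) * (H n - H (n - m) - H m)) := by
  obtain ⟨b, rfl⟩ : ∃ b, n = m + b + 1 := ⟨n - m - 1, by omega⟩
  have e1 : (m+b+1-m : ℕ) = b+1 := by omega
  have e2 : (m+b+1-m-1 : ℕ) = b := by omega
  rw [e2, e1]
  have cL : ∑ i ∈ Finset.Icc 1 m, ((Nat.factorial (m+b+1-i)) : ℝ) / (((Nat.factorial (m-i)) : ℝ) * (i : ℝ)^2)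
      = ∑ i ∈ range m, ((Nat.factorial (m+b-i)) : ℝ)/(((Nat.factorial (m-1-i)) : ℝ) * ((i:ℝ)+1)^2) := by
    rw [← Finset.Ico_add_one_right_eq_Icc, Finset.sum_Ico_eq_sum_range]
    refine Finset.sum_congr (by norm_num) fun i hi => ?_
    rw [show (m+b+1-(1+i) : ℕ) = m+b-i from by omega, show (m-(1+i) : ℕ) = m-1-i from by omega]
    push_cast
    ring_nf
  have cR : ∑ i ∈ Finset.Icc 1 m, H (i + (b+1) - 1) / (i : ℝ)
      = ∑ i ∈ range m, H (i+b+1)/((i:ℝ)+1) := by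
    rw [← Finset.Ico_add_one_right_eq_Icc, Finset.sum_Ico_eq_sum_range]
    refine Finset.sum_congr (by norm_num) fun i hi => ?_
    rw [show (1+i+(b+1)-1 : ℕ) = i+b+1 from by omega]
    push_cast
    ring_nf
  rw [cL, cR]
  exact lemMain m b
end

section
/- For positive integers m, a, n with m + a ≤ n: ∑_{i=1}^m ((n−i)!/(m+a−i)!)·H_{m+a−i} = (1/(n−m−a+1))·( (n!/(a+m−1)!)·(H_{a+m−1} − 1/(n−m−a+1)) − ((n−m)!/(a−1)!)·(H_{a−1} − 1/(n−m−a+1)) ), where H_k = ∑_{j=1}^k 1/j. -/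
open Finset

noncomputable def Gf (c k : ℕ) : ℝ :=
  (Nat.factorial (c + k + 1) : ℝ) / (Nat.factorial k) * (H k - 1 / ((c : ℝ) + 1)) / ((c : ℝ) + 1)

lemma fact_ne (k : ℕ) : ((Nat.factorial k : ℝ)) ≠ 0 := by
  exact_mod_cast (Nat.factorial_pos k).ne'

lemma tele (c k : ℕ) :
    Gf c (k + 1) - Gf c k
      = (Nat.factorial (c + (k + 1)) : ℝ) / (Nat.factorial (k + 1)) * H (k + 1) := by
  unfold Gf
  have hH : H (k + 1) = H k + 1 / ((k : ℝ) + 1) := by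
    unfold H; rw [Finset.sum_range_succ]
  have h1 : (Nat.factorial (c + (k + 1) + 1) : ℝ)
      = ((c : ℝ) + k + 2) * (Nat.factorial (c + k + 1)) := by
    have : c + (k + 1) + 1 = (c + k + 1) + 1 := by ring
    rw [this, Nat.factorial_succ]; push_cast; ring
  have h1' : (Nat.factorial (c + (k + 1)) : ℝ) = (Nat.factorial (c + k + 1)) := by
    norm_num [show c + (k + 1) = c + k + 1 from by ring]
  have h2 : (Nat.factorial (k + 1) : ℝ) = ((k : ℝ) + 1) * (Nat.factorial k) := by
    rw [Nat.factorial_succ]; push_cast; ring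
  rw [hH, h1, h1', h2]
  have hc : ((c : ℝ) + 1) ≠ 0 := by positivity
  have hk : ((k : ℝ) + 1) ≠ 0 := by positivity
  field_simp
  ring

theorem stmt11 (m a n : ℕ) (hm : 0 < m) (ha : 0 < a) (hn : 0 < n)
    (h : m + a ≤ n) :
    ∑ i ∈ Finset.Icc 1 m, (((Nat.factorial (n - i)) : ℝ) / ((Nat.factorial (m + a - i)) : ℝ)) * H (m + a - i)
      = (1 / ((n - m - a + 1 : ℕ) : ℝ))
        * ((((Nat.factorial n) : ℝ) / ((Nat.factorial (a + m - 1)) : ℝ))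
              * (H (a + m - 1) - 1 / ((n - m - a + 1 : ℕ) : ℝ))
            - (((Nat.factorial (n - m)) : ℝ) / ((Nat.factorial (a - 1)) : ℝ))
              * (H (a - 1) - 1 / ((n - m - a + 1 : ℕ) : ℝ))) := by
  set c := n - m - a with hc
  have hn' : n = c + m + a := by omega
  have lhs_eq : ∑ i ∈ Finset.Icc 1 m,
      (((Nat.factorial (n - i)) : ℝ) / ((Nat.factorial (m + a - i)) : ℝ)) * H (m + a - i)
      = ∑ i ∈ Finset.range m,
        (Gf c (a - 1 + i + 1) - Gf c (a - 1 + i)) := by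
    rw [show Finset.Icc 1 m = Finset.Ico 1 (m + 1) from by rw [Finset.Ico_add_one_right_eq_Icc],
      Finset.sum_Ico_eq_sum_range]
    rw [show m + 1 - 1 = m from by omega]
    rw [← Finset.sum_range_reflect]
    apply Finset.sum_congr rfl
    intro i hi
    rw [Finset.mem_range] at hi
    have e1 : m + a - (1 + (m - 1 - i)) = a - 1 + i + 1 := by omega
    have e2 : n - (1 + (m - 1 - i)) = c + (a - 1 + i + 1) := by omega
    rw [e1, e2, ← tele c (a - 1 + i)]
  have tsum := Finset.sum_range_sub (fun i => Gf c (a - 1 + i)) m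
  simp only [← add_assoc, Nat.add_zero] at tsum
  rw [lhs_eq, tsum]
  have hcast : ((c + 1 : ℕ) : ℝ) = (c : ℝ) + 1 := by push_cast; ring
  rw [show n - m - a + 1 = c + 1 from rfl, hcast]
  unfold Gf
  rw [show c + (a - 1 + m) + 1 = n from by omega,
    show a - 1 + m = a + m - 1 from by omega,
    show c + (a - 1) + 1 = n - m from by omega]
  ring
end

section
/- For all positive integers m, a, b, c: ∑_{i=1}^m 1/((c+i−1)!·(a+i−1)!·(m−i)!·(m+b−i)!) = (1/((m+b−1)!·(m+a+b−1)!·(c−1)!·(m+c−1)!))·∑_{i=1}^m (m+a+b+i−2)!·(m+c−i−1)!/((a+i−1)!·(m−i)!). -/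
open Finset

lemma star2 (r s : ℕ) : ∀ (P R : ℕ),
    (∑ p ∈ range P, Nat.choose p r * Nat.choose (P + R - (p+1)) s)
      = ∑ t ∈ range (s+1), Nat.choose P (r+1+t) * Nat.choose R (s - t) := by
  intro P
  induction P with
  | zero =>
    intro R
    simp only [range_zero, sum_empty]
    symm
    apply Finset.sum_eq_zero
    intro t _
    have h : r + 1 + t = (r + t) + 1 := by omega
    rw [h, Nat.choose_zero_succ, zero_mul]
  | succ P ih =>
    intro R
    rw [Finset.sum_range_succ]
    have e1 : P + 1 + R - (P + 1) = R := by omega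
    rw [e1]
    have e2 : ∀ p ∈ range P, Nat.choose p r * Nat.choose (P + 1 + R - (p+1)) s
        = Nat.choose p r * Nat.choose (P + (R+1) - (p+1)) s := by
      intro p _; congr 2; omega
    rw [Finset.sum_congr rfl e2, ih (R+1)]
    have pascalR : ∀ t ∈ range s, Nat.choose P (r+1+t) * Nat.choose (R+1) (s - t)
        = Nat.choose P (r+1+t) * Nat.choose R (s - (t+1))
          + Nat.choose P (r+1+t) * Nat.choose R (s - t) := by
      intro t ht
      rw [Finset.mem_range] at ht
      have h1 : s - t = (s - (t+1)) + 1 := by omega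
      rw [h1, Nat.choose_succ_succ', ← h1, Nat.mul_add]
    have pascalP : ∀ t ∈ range (s+1), Nat.choose (P+1) (r+1+t) * Nat.choose R (s - t)
        = Nat.choose P (r+t) * Nat.choose R (s - t)
          + Nat.choose P (r+1+t) * Nat.choose R (s - t) := by
      intro t _
      have h1 : r + 1 + t = (r + t) + 1 := by omega
      rw [h1, Nat.choose_succ_succ', ← h1, Nat.add_mul]
    rw [Finset.sum_congr rfl pascalP, Finset.sum_add_distrib]
    rw [Finset.sum_range_succ (fun t => Nat.choose P (r+1+t) * Nat.choose (R+1) (s - t)),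
      Finset.sum_congr rfl pascalR, Finset.sum_add_distrib]
    rw [Finset.sum_range_succ' (fun t => Nat.choose P (r+t) * Nat.choose R (s - t))]
    have e3 : ∀ t ∈ range s, Nat.choose P (r+(t+1)) * Nat.choose R (s - (t+1))
        = Nat.choose P (r+1+t) * Nat.choose R (s - (t+1)) := by
      intro t _; congr 2; omega
    rw [Finset.sum_congr rfl e3]
    rw [Finset.sum_range_succ (fun t => Nat.choose P (r+1+t) * Nat.choose R (s - t))]
    simp only [Nat.sub_self, Nat.sub_zero, Nat.add_zero, Nat.choose_zero_right, Nat.mul_one]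
    ring

lemma vwindow (x y lo : ℕ) :
    ∑ t ∈ range (y+1), Nat.choose x (lo+t) * Nat.choose y (y-t) = Nat.choose (x+y) (y+lo) := by
  have hv := Nat.add_choose_eq x y (y+lo)
  rw [Finset.Nat.sum_antidiagonal_eq_sum_range_succ_mk] at hv
  simp only at hv
  rw [show (y+lo).succ = lo + (y+1) by omega,
    Finset.sum_range_add (fun k => Nat.choose x k * Nat.choose y (y+lo-k)) lo (y+1)] at hv
  have h0 : ∑ k ∈ range lo, Nat.choose x k * Nat.choose y (y + lo - k) = 0 := by
    apply Finset.sum_eq_zero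
    intro k hk
    rw [Finset.mem_range] at hk
    rw [Nat.choose_eq_zero_of_lt (by omega : y < y + lo - k), Nat.mul_zero]
  rw [h0, zero_add] at hv
  rw [hv]
  apply Finset.sum_congr rfl
  intro t ht
  rw [Finset.mem_range] at ht
  congr 1
  congr 1
  omega

lemma star_main (M A B C : ℕ) :
    ∑ t ∈ range (M+1), Nat.choose (M+A+B+2) (A+1+t) * Nat.choose (M+C+1) (M-t)
      = ∑ t ∈ range (M+1), Nat.choose (M+A+B+2+t) (M+B+1) * Nat.choose (M+C-t) C := by
  -- reflect + symm : LHS = window form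
  have hrefl : ∑ t ∈ range (M+1), Nat.choose (M+A+B+2) (A+1+t) * Nat.choose (M+C+1) (M-t)
      = ∑ t ∈ range (M+1), Nat.choose (M+A+B+2) (B+1+t) * Nat.choose (M+C+1) (M+C+1-t) := by
    rw [← Finset.sum_range_reflect
      (fun t => Nat.choose (M+A+B+2) (B+1+t) * Nat.choose (M+C+1) (M+C+1-t)) (M+1)]
    apply Finset.sum_congr rfl
    intro t ht
    rw [Finset.mem_range] at ht
    rw [show B + 1 + (M + 1 - 1 - t) = (M+A+B+2) - (A+1+t) by omega,
      show M + C + 1 - (M + 1 - 1 - t) = (M+C+1) - ((M+C+1) - (C+1+t)) by omega,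
      Nat.choose_symm (by omega : A+1+t ≤ M+A+B+2),
      Nat.choose_symm (by omega : (M+C+1) - (C+1+t) ≤ M+C+1)]
    congr 1
    congr 1
    omega
  have hW := vwindow (M+A+B+2) (M+C+1) (B+1)
  have hsplit : ∑ t ∈ range (M+C+1+1), Nat.choose (M+A+B+2) (B+1+t) * Nat.choose (M+C+1) (M+C+1-t)
      = (∑ t ∈ range (M+1), Nat.choose (M+A+B+2) (B+1+t) * Nat.choose (M+C+1) (M+C+1-t))
        + ∑ t ∈ range (C+1), Nat.choose (M+A+B+2) (M+B+2+t) * Nat.choose (M+C+1) (C-t) := by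
    rw [show M+C+1+1 = (M+1) + (C+1) by omega,
      Finset.sum_range_add (fun t => Nat.choose (M+A+B+2) (B+1+t) * Nat.choose (M+C+1) (M+C+1-t))
        (M+1) (C+1)]
    congr 1
    apply Finset.sum_congr rfl
    intro t ht
    rw [Finset.mem_range] at ht
    rw [show B + 1 + (M+1+t) = M+B+2+t by omega, show M+C+1 - (M+1+t) = C - t by omega]
  have hfull := star2 (M+B+1) C (2*M+A+B+C+3) 0
  simp only [Nat.add_zero] at hfull
  have hfullR : ∑ t ∈ range (C+1),
        Nat.choose (2*M+A+B+C+3) (M+B+1+1+t) * Nat.choose 0 (C - t)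
      = Nat.choose (2*M+A+B+C+3) (M+B+C+2) := by
    rw [Finset.sum_range_succ]
    have hz : ∑ t ∈ range C, Nat.choose (2*M+A+B+C+3) (M+B+1+1+t) * Nat.choose 0 (C - t) = 0 := by
      apply Finset.sum_eq_zero
      intro t ht
      rw [Finset.mem_range] at ht
      rw [show C - t = (C - t - 1) + 1 by omega, Nat.choose_zero_succ, Nat.mul_zero]
    rw [hz, zero_add, Nat.sub_self, Nat.choose_zero_right, Nat.mul_one]
    congr 1
    omega
  have hsplit2 : ∑ p ∈ range (2*M+A+B+C+3),
        Nat.choose p (M+B+1) * Nat.choose (2*M+A+B+C+3 - (p+1)) C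
      = (∑ p ∈ range (M+A+B+2),
          Nat.choose p (M+B+1) * Nat.choose ((M+A+B+2) + (M+C+1) - (p+1)) C)
        + ∑ t ∈ range (M+1), Nat.choose (M+A+B+2+t) (M+B+1) * Nat.choose (M+C-t) C := by
    rw [show 2*M+A+B+C+3 = (M+A+B+2) + ((M+1) + C) by omega,
      Finset.sum_range_add
        (fun p => Nat.choose p (M+B+1) * Nat.choose ((M+A+B+2) + ((M+1)+C) - (p+1)) C)
        (M+A+B+2) ((M+1)+C),
      Finset.sum_range_add
        (fun t => Nat.choose (M+A+B+2+t) (M+B+1)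
          * Nat.choose (M+A+B+2 + ((M+1)+C) - (M+A+B+2+t+1)) C)
        (M+1) C]
    have hz : ∑ t ∈ range C,
        Nat.choose (M+A+B+2+((M+1)+t)) (M+B+1)
          * Nat.choose (M+A+B+2 + ((M+1)+C) - (M+A+B+2+((M+1)+t)+1)) C = 0 := by
      apply Finset.sum_eq_zero
      intro t ht
      rw [Finset.mem_range] at ht
      rw [Nat.choose_eq_zero_of_lt
        (by omega : M+A+B+2 + ((M+1)+C) - (M+A+B+2+((M+1)+t)+1) < C), Nat.mul_zero]
    rw [hz, add_zero]
    congr 1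
    · apply Finset.sum_congr rfl
      intro p hp
      rw [Finset.mem_range] at hp
      congr 1
      congr 1
      omega
    · apply Finset.sum_congr rfl
      intro t ht
      rw [Finset.mem_range] at ht
      rw [show M+A+B+2 + ((M+1)+C) - (M+A+B+2+t+1) = M+C-t by omega]
  have hlow := star2 (M+B+1) C (M+A+B+2) (M+C+1)
  have hlowR : ∑ t ∈ range (C+1),
        Nat.choose (M+A+B+2) (M+B+1+1+t) * Nat.choose (M+C+1) (C - t)
      = ∑ t ∈ range (C+1), Nat.choose (M+A+B+2) (M+B+2+t) * Nat.choose (M+C+1) (C-t) := by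
    apply Finset.sum_congr rfl
    intro t _
    rw [show M+B+1+1+t = M+B+2+t by omega]
  rw [hlowR] at hlow
  rw [hfull, hfullR] at hsplit2
  rw [show (M+A+B+2) + (M+C+1) = 2*M+A+B+C+3 by omega,
    show M+C+1 + (B+1) = M+B+C+2 by omega] at hW
  rw [hrefl]
  omega

theorem stmt13 (m a b c : ℕ) (hm : 0 < m) (ha : 0 < a) (hb : 0 < b) (hc : 0 < c) :
    ∑ i ∈ Finset.Icc 1 m,
        1 / (((Nat.factorial (c + i - 1)) : ℝ) * ((Nat.factorial (a + i - 1)) : ℝ) * ((Nat.factorial (m - i)) : ℝ)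
              * ((Nat.factorial (m + b - i)) : ℝ))
      = (1 / (((Nat.factorial (m + b - 1)) : ℝ) * ((Nat.factorial (m + a + b - 1)) : ℝ) * ((Nat.factorial (c - 1)) : ℝ)
              * ((Nat.factorial (m + c - 1)) : ℝ)))
        * ∑ i ∈ Finset.Icc 1 m,
            ((Nat.factorial (m + a + b + i - 2)) : ℝ) * ((Nat.factorial (m + c - i - 1)) : ℝ)
              / (((Nat.factorial (a + i - 1)) : ℝ) * ((Nat.factorial (m - i)) : ℝ)) := by
  obtain ⟨M, rfl⟩ : ∃ M, m = M + 1 := ⟨m - 1, by omega⟩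
  obtain ⟨A, rfl⟩ : ∃ A, a = A + 1 := ⟨a - 1, by omega⟩
  obtain ⟨B, rfl⟩ : ∃ B, b = B + 1 := ⟨b - 1, by omega⟩
  obtain ⟨C, rfl⟩ : ∃ C, c = C + 1 := ⟨c - 1, by omega⟩
  have fpos : ∀ n : ℕ, (0:ℝ) < (Nat.factorial n : ℝ) := fun n => by
    exact_mod_cast Nat.factorial_pos n
  have hL : ∑ i ∈ Finset.Icc 1 (M+1),
        1 / (((Nat.factorial (C + 1 + i - 1)) : ℝ) * ((Nat.factorial (A + 1 + i - 1)) : ℝ)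
          * ((Nat.factorial (M + 1 - i)) : ℝ) * ((Nat.factorial (M + 1 + (B+1) - i)) : ℝ))
      = ((∑ t ∈ range (M+1), Nat.choose (M+A+B+2) (A+1+t) * Nat.choose (M+C+1) (M-t) : ℕ) : ℝ)
          / ((Nat.factorial (M+A+B+2) : ℝ) * (Nat.factorial (M+C+1) : ℝ)) := by
    rw [← Finset.Ico_add_one_right_eq_Icc, Finset.sum_Ico_eq_sum_range]
    rw [show M + 1 + 1 - 1 = M + 1 by omega]
    rw [Nat.cast_sum, Finset.sum_div]
    apply Finset.sum_congr rfl
    intro t ht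
    rw [Finset.mem_range] at ht
    rw [show C + 1 + (1 + t) - 1 = C + 1 + t by omega,
      show A + 1 + (1 + t) - 1 = A + 1 + t by omega,
      show M + 1 - (1 + t) = M - t by omega,
      show M + 1 + (B + 1) - (1 + t) = M + B + 1 - t by omega]
    have k1 : Nat.choose (M+A+B+2) (A+1+t) * Nat.factorial (A+1+t) * Nat.factorial (M+B+1-t)
        = Nat.factorial (M+A+B+2) := by
      have h := Nat.choose_mul_factorial_mul_factorial (by omega : A+1+t ≤ M+A+B+2)
      rwa [show M+A+B+2 - (A+1+t) = M+B+1-t by omega] at h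
    have k2 : Nat.choose (M+C+1) (M-t) * Nat.factorial (M-t) * Nat.factorial (C+1+t)
        = Nat.factorial (M+C+1) := by
      have h := Nat.choose_mul_factorial_mul_factorial (by omega : M-t ≤ M+C+1)
      rwa [show M+C+1 - (M-t) = C+1+t by omega] at h
    have k1' := congrArg (Nat.cast : ℕ → ℝ) k1
    have k2' := congrArg (Nat.cast : ℕ → ℝ) k2
    push_cast at k1' k2' ⊢
    rw [div_eq_div_iff (by positivity) (by positivity), ← k1', ← k2']
    ring
  have hR : ∑ i ∈ Finset.Icc 1 (M+1),
        ((Nat.factorial (M + 1 + (A+1) + (B+1) + i - 2)) : ℝ) * ((Nat.factorial (M + 1 + (C+1) - i - 1)) : ℝ)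
          / (((Nat.factorial (A + 1 + i - 1)) : ℝ) * ((Nat.factorial (M + 1 - i)) : ℝ))
      = ((∑ t ∈ range (M+1), Nat.choose (M+A+B+2+t) (M+B+1) * Nat.choose (M+C-t) C : ℕ) : ℝ)
          * ((Nat.factorial (M+B+1) : ℝ) * (Nat.factorial C : ℝ)) := by
    rw [← Finset.Ico_add_one_right_eq_Icc, Finset.sum_Ico_eq_sum_range]
    rw [show M + 1 + 1 - 1 = M + 1 by omega]
    rw [Nat.cast_sum, Finset.sum_mul]
    apply Finset.sum_congr rfl
    intro t ht
    rw [Finset.mem_range] at ht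
    rw [show M + 1 + (A+1) + (B+1) + (1+t) - 2 = M+A+B+2+t by omega,
      show M + 1 + (C+1) - (1+t) - 1 = M+C-t by omega,
      show A + 1 + (1+t) - 1 = A + 1 + t by omega,
      show M + 1 - (1+t) = M - t by omega]
    have k1 : Nat.choose (M+A+B+2+t) (M+B+1) * Nat.factorial (M+B+1) * Nat.factorial (A+1+t)
        = Nat.factorial (M+A+B+2+t) := by
      have h := Nat.choose_mul_factorial_mul_factorial (by omega : M+B+1 ≤ M+A+B+2+t)
      rwa [show M+A+B+2+t - (M+B+1) = A+1+t by omega] at h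
    have k2 : Nat.choose (M+C-t) C * Nat.factorial C * Nat.factorial (M-t)
        = Nat.factorial (M+C-t) := by
      have h := Nat.choose_mul_factorial_mul_factorial (by omega : C ≤ M+C-t)
      rwa [show M+C-t - C = M-t by omega] at h
    have k1' := congrArg (Nat.cast : ℕ → ℝ) k1
    have k2' := congrArg (Nat.cast : ℕ → ℝ) k2
    push_cast at k1' k2' ⊢
    rw [div_eq_iff (by positivity), ← k1', ← k2']
    ring
  rw [hL, hR,
    show C + 1 - 1 = C by omega,
    show M + 1 + (B+1) - 1 = M + B + 1 by omega,
    show M + 1 + (A+1) + (B+1) - 1 = M+A+B+2 by omega,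
    show M + 1 + (C+1) - 1 = M+C+1 by omega,
    star_main M A B C]
  have h1 := fpos (M+B+1)
  have h2 := fpos (M+A+B+2)
  have h3 := fpos C
  have h4 := fpos (M+C+1)
  field_simp
end

section
/- For all positive integers m, a, b, c, d: ∑_{i=1}^m 1/((c+i−1)!·(a+i−1)!·(d+m−i)!·(b+m−i)!) = (1/((d−1)!·(a+m−1)!·(a+b+m−1)!·(c+d+m−1)!))·∑_{i=1}^m (c+d+i−2)!·(a+b+2m−i−1)!/((c+i−1)!·(b+m−i)!) + (1/((c−1)!·(b+m−1)!·(a+b+m−1)!·(c+d+m−1)!))·∑_{i=1}^m (c+d+i−2)!·(a+b+2m−i−1)!/((d+i−1)!·(a+m−i)!). -/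
open Finset
lemma chch (n1 n1' k1 k1' n2 n2' k2 k2' : ℕ) (h1 : n1 = n1') (h2 : k1 = k1')
    (h3 : n2 = n2') (h4 : k2 = k2') :
    n1.choose k1 * n2.choose k2 = n1'.choose k1' * n2'.choose k2' := by
  subst h1 h2 h3 h4; rfl

lemma pascal_term (c p n k : ℕ) :
    (p+1).choose c * (n+1).choose (k+1) + (p+1).choose (c+1) * (n+1).choose (k+1)
      = (p+2).choose (c+1) * n.choose k + (p+2).choose (c+1) * n.choose (k+1) := by
  have h1 : (p+2).choose (c+1) = (p+1).choose c + (p+1).choose (c+1) :=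
    Nat.choose_succ_succ (p+1) c
  have h2 : (n+1).choose (k+1) = n.choose k + n.choose (k+1) :=
    Nat.choose_succ_succ n k
  rw [h1, h2]; ring

lemma tele_sum (F G H : ℕ → ℕ) : ∀ n : ℕ, (∀ i < n, F i + H i = G i + H (i+1)) →
    ∑ i ∈ range n, F i + H 0 = ∑ i ∈ range n, G i + H n := by
  intro n
  induction n with
  | zero => intro _; simp
  | succ n ih =>
    intro h
    rw [Finset.sum_range_succ F, Finset.sum_range_succ G]
    have h1 := ih (fun i hi => h i (by omega))
    have h2 := h n (by omega)
    omega

lemma key : ∀ (m a b c d : ℕ),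
    ∑ i ∈ range m, (c+d+m+1).choose (c+i+1) * (a+b+m+1).choose (a+i+1)
      = ∑ i ∈ range m, ((c+d+i+1).choose d * (a+b+2*m-i).choose (a+m)
          + (c+d+i+1).choose c * (a+b+2*m-i).choose (b+m)) := by
  intro m
  induction m with
  | zero => intro a b c d; simp
  | succ m ih =>
    intro a b c d
    -- split RHS pair-sum and peel
    rw [sum_add_distrib,
      Finset.sum_range_succ' (fun i => (c+d+(m+1)+1).choose (c+i+1) * (a+b+(m+1)+1).choose (a+i+1)) m,
      Finset.sum_range_succ' (fun i => (c+d+i+1).choose d * (a+b+2*(m+1)-i).choose (a+(m+1))) m]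
    -- IH application
    have A : ∑ i ∈ range m,
          (c+d+(m+1)+1).choose (c+(i+1)+1) * (a+b+(m+1)+1).choose (a+(i+1)+1)
        = ∑ i ∈ range m, ((c+d+(i+1)+1).choose d * (a+b+2*(m+1)-(i+1)).choose (a+(m+1)))
          + ∑ i ∈ range m, ((c+d+i+2).choose (c+1) * (a+b+2*m+1-i).choose (b+m)) := by
      rw [← sum_add_distrib]
      calc ∑ i ∈ range m,
            (c+d+(m+1)+1).choose (c+(i+1)+1) * (a+b+(m+1)+1).choose (a+(i+1)+1)
          = ∑ i ∈ range m,
            ((c+1)+d+m+1).choose ((c+1)+i+1) * ((a+1)+b+m+1).choose ((a+1)+i+1) :=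
            sum_congr rfl (fun i _ =>
              chch _ _ _ _ _ _ _ _ (by omega) (by omega) (by omega) (by omega))
        _ = ∑ i ∈ range m, (((c+1)+d+i+1).choose d * ((a+1)+b+2*m-i).choose ((a+1)+m)
              + ((c+1)+d+i+1).choose (c+1) * ((a+1)+b+2*m-i).choose (b+m)) :=
            ih (a+1) b (c+1) d
        _ = ∑ i ∈ range m, ((c+d+(i+1)+1).choose d * (a+b+2*(m+1)-(i+1)).choose (a+(m+1))
              + (c+d+i+2).choose (c+1) * (a+b+2*m+1-i).choose (b+m)) :=
            sum_congr rfl (fun i _ => by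
              exact congrArg₂ (· + ·)
                (chch _ _ _ _ _ _ _ _ (by omega) (by omega) (by omega) (by omega))
                (chch _ _ _ _ _ _ _ _ (by omega) (by omega) (by omega) (by omega)))
    -- telescoping
    have B : ∑ i ∈ range (m+1),
          (c+d+i+1).choose c * (a+b+2*(m+1)-i).choose (b+(m+1))
          + (c+d+0+1).choose (c+1) * (a+b+2*(m+1)-0).choose (b+(m+1))
        = ∑ i ∈ range (m+1), ((c+d+i+2).choose (c+1) * (a+b+2*m+1-i).choose (b+m))
          + (c+d+(m+1)+1).choose (c+1) * (a+b+2*(m+1)-(m+1)).choose (b+(m+1)) := by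
      have := tele_sum
        (fun i => (c+d+i+1).choose c * (a+b+2*(m+1)-i).choose (b+(m+1)))
        (fun i => (c+d+i+2).choose (c+1) * (a+b+2*m+1-i).choose (b+m))
        (fun i => (c+d+i+1).choose (c+1) * (a+b+2*(m+1)-i).choose (b+(m+1)))
        (m+1) ?_
      · exact this
      · intro i hi
        beta_reduce
        obtain ⟨n, hn1, hn2⟩ : ∃ n, a+b+2*m+1-i = n ∧ a+b+2*(m+1)-i = n+1 :=
          ⟨a+b+2*m+1-i, rfl, by omega⟩
        rw [hn1, hn2, show a+b+2*(m+1)-(i+1) = n by omega,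
          show b+(m+1) = (b+m)+1 by omega, show c+d+i+2 = (c+d+i+1)+1 by omega]
        exact pascal_term c (c+d+i) n (b+m)
    -- peel last term of the telescoped sum
    have B2 : ∑ i ∈ range (m+1), ((c+d+i+2).choose (c+1) * (a+b+2*m+1-i).choose (b+m))
        = ∑ i ∈ range m, ((c+d+i+2).choose (c+1) * (a+b+2*m+1-i).choose (b+m))
          + (c+d+m+2).choose (c+1) * (a+b+2*m+1-m).choose (b+m) :=
      Finset.sum_range_succ _ m
    -- scalar identities
    have C1 : (c+d+(m+1)+1).choose (c+0+1) * (a+b+(m+1)+1).choose (a+0+1)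
        = (c+d+m+2).choose (c+1) * (a+b+2*m+1-m).choose (b+m)
          + (c+d+(m+1)+1).choose (c+1) * (a+b+2*(m+1)-(m+1)).choose (b+(m+1)) := by
      rw [show a+b+2*m+1-m = a+b+m+1 by omega, show a+b+2*(m+1)-(m+1) = a+b+m+1 by omega,
        show c+d+(m+1)+1 = c+d+m+2 by omega, show c+0+1 = c+1 by omega,
        show b+(m+1) = (b+m)+1 by omega, ← Nat.mul_add,
        show a+b+(m+1)+1 = (a+b+m+1)+1 by omega,
        ← Nat.choose_succ_succ (a+b+m+1) (b+m)]
      congr 1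
      rw [show a+0+1 = (a+b+m+1+1) - ((b+m)+1) by omega]
      exact Nat.choose_symm (by omega)
    have C2 : (c+d+0+1).choose d * (a+b+2*(m+1)-0).choose (a+(m+1))
        = (c+d+0+1).choose (c+1) * (a+b+2*(m+1)-0).choose (b+(m+1)) := by
      have C2a : (c+d+0+1).choose d = (c+d+0+1).choose (c+1) := by
        rw [show c+1 = (c+d+0+1)-d by omega]
        exact (Nat.choose_symm (by omega)).symm
      have C2b : (a+b+2*(m+1)-0).choose (a+(m+1)) = (a+b+2*(m+1)-0).choose (b+(m+1)) := by
        rw [show b+(m+1) = (a+b+2*(m+1)-0)-(a+(m+1)) by omega]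
        exact (Nat.choose_symm (by omega)).symm
      rw [C2a, C2b]
    omega

theorem stmt15 (m a b c d : ℕ) (hm : 0 < m) (ha : 0 < a) (hb : 0 < b)
    (hc : 0 < c) (hd : 0 < d) :
    ∑ i ∈ Finset.Icc 1 m,
        1 / (((Nat.factorial (c + i - 1)) : ℝ) * ((Nat.factorial (a + i - 1)) : ℝ) * ((Nat.factorial (d + m - i)) : ℝ)
              * ((Nat.factorial (b + m - i)) : ℝ))
      = (1 / (((Nat.factorial (d - 1)) : ℝ) * ((Nat.factorial (a + m - 1)) : ℝ) * ((Nat.factorial (a + b + m - 1)) : ℝ)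
              * ((Nat.factorial (c + d + m - 1)) : ℝ)))
        * (∑ i ∈ Finset.Icc 1 m,
            ((Nat.factorial (c + d + i - 2)) : ℝ) * ((Nat.factorial (a + b + 2 * m - i - 1)) : ℝ)
              / (((Nat.factorial (c + i - 1)) : ℝ) * ((Nat.factorial (b + m - i)) : ℝ)))
      + (1 / (((Nat.factorial (c - 1)) : ℝ) * ((Nat.factorial (b + m - 1)) : ℝ) * ((Nat.factorial (a + b + m - 1)) : ℝ)
              * ((Nat.factorial (c + d + m - 1)) : ℝ)))
        * (∑ i ∈ Finset.Icc 1 m,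
            ((Nat.factorial (c + d + i - 2)) : ℝ) * ((Nat.factorial (a + b + 2 * m - i - 1)) : ℝ)
              / (((Nat.factorial (d + i - 1)) : ℝ) * ((Nat.factorial (a + m - i)) : ℝ))) := by
  set K : ℝ := ((Nat.factorial (a+b+m-1) : ℝ)) * ((Nat.factorial (c+d+m-1) : ℝ)) with hKdef
  have hK : (0:ℝ) < K := by
    rw [hKdef]
    have := Nat.factorial_pos (a+b+m-1)
    have := Nat.factorial_pos (c+d+m-1)
    positivity
  -- LHS
  have EqL : ∑ i ∈ Finset.Icc 1 m,
      1 / (((Nat.factorial (c + i - 1)) : ℝ) * ((Nat.factorial (a + i - 1)) : ℝ)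
        * ((Nat.factorial (d + m - i)) : ℝ) * ((Nat.factorial (b + m - i)) : ℝ))
      = ((∑ i ∈ Finset.Icc 1 m,
          (c+d+m-1).choose (c+i-1) * (a+b+m-1).choose (a+i-1) : ℕ) : ℝ) / K := by
    rw [Nat.cast_sum, Finset.sum_div]
    apply sum_congr rfl
    intro i hi
    rw [Finset.mem_Icc] at hi
    have w1 : c+i-1 ≤ c+d+m-1 := by omega
    have w2 : a+i-1 ≤ a+b+m-1 := by omega
    have e1 : (c+d+m-1).choose (c+i-1) * (c+i-1).factorial * (d+m-i).factorial
        = (c+d+m-1).factorial := by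
      have h := Nat.choose_mul_factorial_mul_factorial w1
      rwa [show c+d+m-1 - (c+i-1) = d+m-i from by omega] at h
    have e2 : (a+b+m-1).choose (a+i-1) * (a+i-1).factorial * (b+m-i).factorial
        = (a+b+m-1).factorial := by
      have h := Nat.choose_mul_factorial_mul_factorial w2
      rwa [show a+b+m-1 - (a+i-1) = b+m-i from by omega] at h
    have e1r : (((c+d+m-1).choose (c+i-1) : ℝ)) * ((c+i-1).factorial : ℝ)
        * ((d+m-i).factorial : ℝ) = ((c+d+m-1).factorial : ℝ) := by exact_mod_cast e1
    have e2r : (((a+b+m-1).choose (a+i-1) : ℝ)) * ((a+i-1).factorial : ℝ)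
        * ((b+m-i).factorial : ℝ) = ((a+b+m-1).factorial : ℝ) := by exact_mod_cast e2
    have n1 : ((c+i-1).factorial : ℝ) ≠ 0 := Nat.cast_ne_zero.mpr (Nat.factorial_ne_zero _)
    have n2 : ((a+i-1).factorial : ℝ) ≠ 0 := Nat.cast_ne_zero.mpr (Nat.factorial_ne_zero _)
    have n3 : ((d+m-i).factorial : ℝ) ≠ 0 := Nat.cast_ne_zero.mpr (Nat.factorial_ne_zero _)
    have n4 : ((b+m-i).factorial : ℝ) ≠ 0 := Nat.cast_ne_zero.mpr (Nat.factorial_ne_zero _)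
    have x1 : (((c+d+m-1).choose (c+i-1) : ℕ) : ℝ) ≠ 0 :=
      Nat.cast_ne_zero.mpr (Nat.choose_pos w1).ne'
    have x2 : (((a+b+m-1).choose (a+i-1) : ℕ) : ℝ) ≠ 0 :=
      Nat.cast_ne_zero.mpr (Nat.choose_pos w2).ne'
    rw [hKdef]
    push_cast
    rw [← e1r, ← e2r]
    field_simp
  -- RHS first sum
  have EqR1 : (1 / (((Nat.factorial (d - 1)) : ℝ) * ((Nat.factorial (a + m - 1)) : ℝ)
        * ((Nat.factorial (a + b + m - 1)) : ℝ) * ((Nat.factorial (c + d + m - 1)) : ℝ)))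
        * (∑ i ∈ Finset.Icc 1 m,
            ((Nat.factorial (c + d + i - 2)) : ℝ) * ((Nat.factorial (a + b + 2 * m - i - 1)) : ℝ)
              / (((Nat.factorial (c + i - 1)) : ℝ) * ((Nat.factorial (b + m - i)) : ℝ)))
      = ((∑ i ∈ Finset.Icc 1 m,
          (c+d+i-2).choose (d-1) * (a+b+2*m-i-1).choose (a+m-1) : ℕ) : ℝ) / K := by
    rw [Finset.mul_sum, Nat.cast_sum, Finset.sum_div]
    apply sum_congr rfl
    intro i hi
    rw [Finset.mem_Icc] at hi
    have w1 : d-1 ≤ c+d+i-2 := by omega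
    have w2 : a+m-1 ≤ a+b+2*m-i-1 := by omega
    have e1 : (c+d+i-2).choose (d-1) * (d-1).factorial * (c+i-1).factorial
        = (c+d+i-2).factorial := by
      have h := Nat.choose_mul_factorial_mul_factorial w1
      rwa [show c+d+i-2 - (d-1) = c+i-1 from by omega] at h
    have e2 : (a+b+2*m-i-1).choose (a+m-1) * (a+m-1).factorial * (b+m-i).factorial
        = (a+b+2*m-i-1).factorial := by
      have h := Nat.choose_mul_factorial_mul_factorial w2
      rwa [show a+b+2*m-i-1 - (a+m-1) = b+m-i from by omega] at h
    have e1r : (((c+d+i-2).choose (d-1) : ℝ)) * ((d-1).factorial : ℝ)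
        * ((c+i-1).factorial : ℝ) = ((c+d+i-2).factorial : ℝ) := by exact_mod_cast e1
    have e2r : (((a+b+2*m-i-1).choose (a+m-1) : ℝ)) * ((a+m-1).factorial : ℝ)
        * ((b+m-i).factorial : ℝ) = ((a+b+2*m-i-1).factorial : ℝ) := by exact_mod_cast e2
    have n1 : ((d-1).factorial : ℝ) ≠ 0 := Nat.cast_ne_zero.mpr (Nat.factorial_ne_zero _)
    have n2 : ((a+m-1).factorial : ℝ) ≠ 0 := Nat.cast_ne_zero.mpr (Nat.factorial_ne_zero _)
    have n3 : ((c+i-1).factorial : ℝ) ≠ 0 := Nat.cast_ne_zero.mpr (Nat.factorial_ne_zero _)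
    have n4 : ((b+m-i).factorial : ℝ) ≠ 0 := Nat.cast_ne_zero.mpr (Nat.factorial_ne_zero _)
    have n5 : ((a+b+m-1).factorial : ℝ) ≠ 0 := Nat.cast_ne_zero.mpr (Nat.factorial_ne_zero _)
    have n6 : ((c+d+m-1).factorial : ℝ) ≠ 0 := Nat.cast_ne_zero.mpr (Nat.factorial_ne_zero _)
    have x1 : (((c+d+i-2).choose (d-1) : ℕ) : ℝ) ≠ 0 :=
      Nat.cast_ne_zero.mpr (Nat.choose_pos w1).ne'
    have x2 : (((a+b+2*m-i-1).choose (a+m-1) : ℕ) : ℝ) ≠ 0 :=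
      Nat.cast_ne_zero.mpr (Nat.choose_pos w2).ne'
    rw [hKdef]
    push_cast
    rw [← e1r, ← e2r]
    field_simp
  -- RHS second sum
  have EqR2 : (1 / (((Nat.factorial (c - 1)) : ℝ) * ((Nat.factorial (b + m - 1)) : ℝ)
        * ((Nat.factorial (a + b + m - 1)) : ℝ) * ((Nat.factorial (c + d + m - 1)) : ℝ)))
        * (∑ i ∈ Finset.Icc 1 m,
            ((Nat.factorial (c + d + i - 2)) : ℝ) * ((Nat.factorial (a + b + 2 * m - i - 1)) : ℝ)
              / (((Nat.factorial (d + i - 1)) : ℝ) * ((Nat.factorial (a + m - i)) : ℝ)))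
      = ((∑ i ∈ Finset.Icc 1 m,
          (c+d+i-2).choose (c-1) * (a+b+2*m-i-1).choose (b+m-1) : ℕ) : ℝ) / K := by
    rw [Finset.mul_sum, Nat.cast_sum, Finset.sum_div]
    apply sum_congr rfl
    intro i hi
    rw [Finset.mem_Icc] at hi
    have w1 : c-1 ≤ c+d+i-2 := by omega
    have w2 : b+m-1 ≤ a+b+2*m-i-1 := by omega
    have e1 : (c+d+i-2).choose (c-1) * (c-1).factorial * (d+i-1).factorial
        = (c+d+i-2).factorial := by
      have h := Nat.choose_mul_factorial_mul_factorial w1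
      rwa [show c+d+i-2 - (c-1) = d+i-1 from by omega] at h
    have e2 : (a+b+2*m-i-1).choose (b+m-1) * (b+m-1).factorial * (a+m-i).factorial
        = (a+b+2*m-i-1).factorial := by
      have h := Nat.choose_mul_factorial_mul_factorial w2
      rwa [show a+b+2*m-i-1 - (b+m-1) = a+m-i from by omega] at h
    have e1r : (((c+d+i-2).choose (c-1) : ℝ)) * ((c-1).factorial : ℝ)
        * ((d+i-1).factorial : ℝ) = ((c+d+i-2).factorial : ℝ) := by exact_mod_cast e1
    have e2r : (((a+b+2*m-i-1).choose (b+m-1) : ℝ)) * ((b+m-1).factorial : ℝ)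
        * ((a+m-i).factorial : ℝ) = ((a+b+2*m-i-1).factorial : ℝ) := by exact_mod_cast e2
    have n1 : ((c-1).factorial : ℝ) ≠ 0 := Nat.cast_ne_zero.mpr (Nat.factorial_ne_zero _)
    have n2 : ((b+m-1).factorial : ℝ) ≠ 0 := Nat.cast_ne_zero.mpr (Nat.factorial_ne_zero _)
    have n3 : ((d+i-1).factorial : ℝ) ≠ 0 := Nat.cast_ne_zero.mpr (Nat.factorial_ne_zero _)
    have n4 : ((a+m-i).factorial : ℝ) ≠ 0 := Nat.cast_ne_zero.mpr (Nat.factorial_ne_zero _)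
    have n5 : ((a+b+m-1).factorial : ℝ) ≠ 0 := Nat.cast_ne_zero.mpr (Nat.factorial_ne_zero _)
    have n6 : ((c+d+m-1).factorial : ℝ) ≠ 0 := Nat.cast_ne_zero.mpr (Nat.factorial_ne_zero _)
    have x1 : (((c+d+i-2).choose (c-1) : ℕ) : ℝ) ≠ 0 :=
      Nat.cast_ne_zero.mpr (Nat.choose_pos w1).ne'
    have x2 : (((a+b+2*m-i-1).choose (b+m-1) : ℕ) : ℝ) ≠ 0 :=
      Nat.cast_ne_zero.mpr (Nat.choose_pos w2).ne'
    rw [hKdef]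
    push_cast
    rw [← e1r, ← e2r]
    field_simp
  -- the natural-number identity
  have hNat : ∑ i ∈ Finset.Icc 1 m, (c+d+m-1).choose (c+i-1) * (a+b+m-1).choose (a+i-1)
      = ∑ i ∈ Finset.Icc 1 m, ((c+d+i-2).choose (d-1) * (a+b+2*m-i-1).choose (a+m-1)
        + (c+d+i-2).choose (c-1) * (a+b+2*m-i-1).choose (b+m-1)) := by
    have base := key m (a-1) (b-1) (c-1) (d-1)
    have cL : ∑ i ∈ Finset.Icc 1 m, (c+d+m-1).choose (c+i-1) * (a+b+m-1).choose (a+i-1)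
        = ∑ i ∈ range m, ((c-1)+(d-1)+m+1).choose ((c-1)+i+1)
            * ((a-1)+(b-1)+m+1).choose ((a-1)+i+1) := by
      rw [← Finset.Ico_add_one_right_eq_Icc, Finset.sum_Ico_eq_sum_range]
      simp only [Nat.add_sub_cancel]
      exact sum_congr rfl fun i _ =>
        chch _ _ _ _ _ _ _ _ (by omega) (by omega) (by omega) (by omega)
    have cR : ∑ i ∈ Finset.Icc 1 m, ((c+d+i-2).choose (d-1) * (a+b+2*m-i-1).choose (a+m-1)
          + (c+d+i-2).choose (c-1) * (a+b+2*m-i-1).choose (b+m-1))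
        = ∑ i ∈ range m, (((c-1)+(d-1)+i+1).choose (d-1)
              * ((a-1)+(b-1)+2*m-i).choose ((a-1)+m)
            + ((c-1)+(d-1)+i+1).choose (c-1) * ((a-1)+(b-1)+2*m-i).choose ((b-1)+m)) := by
      rw [← Finset.Ico_add_one_right_eq_Icc, Finset.sum_Ico_eq_sum_range]
      simp only [Nat.add_sub_cancel]
      exact sum_congr rfl fun i _ => congrArg₂ (· + ·)
        (chch _ _ _ _ _ _ _ _ (by omega) (by omega) (by omega) (by omega))
        (chch _ _ _ _ _ _ _ _ (by omega) (by omega) (by omega) (by omega))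
    rw [cL, cR]
    exact base
  rw [EqL, EqR1, EqR2, ← add_div]
  congr 1
  exact_mod_cast hNat.trans Finset.sum_add_distrib
end

section
/- For all positive integers m and positive integers a, b: ∑_{i=1}^m 1/((i−1)!·(a+i−1)!·(m−i)!·(m+b−i)!) = (a+b+2m−2)! / ((m−1)!·(a+m−1)!·(b+m−1)!·(a+b+m−1)!). -/
open Finset

private lemma vand (n N k : ℕ) (h : n ≤ k) :
    ∑ j ∈ Finset.range (n + 1), n.choose j * N.choose (k - j) = (n + N).choose k := by
  rw [Nat.add_choose_eq, Finset.Nat.sum_antidiagonal_eq_sum_range_succ_mk]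
  apply Finset.sum_subset
  · exact Finset.range_subset_range.2 (by omega)
  · intro x _ hx
    rw [Finset.mem_range] at hx
    rw [Nat.choose_eq_zero_of_lt (by omega), zero_mul]

theorem stmt16 (m a b : ℕ) (hm : 0 < m) (ha : 0 < a) (hb : 0 < b) :
    ∑ i ∈ Finset.Icc 1 m,
        1 / (((Nat.factorial (i - 1)) : ℝ) * ((Nat.factorial (a + i - 1)) : ℝ) * ((Nat.factorial (m - i)) : ℝ)
              * ((Nat.factorial (m + b - i)) : ℝ))
      = ((Nat.factorial (a + b + 2 * m - 2)) : ℝ)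
        / (((Nat.factorial (m - 1)) : ℝ) * ((Nat.factorial (a + m - 1)) : ℝ) * ((Nat.factorial (b + m - 1)) : ℝ)
            * ((Nat.factorial (a + b + m - 1)) : ℝ)) := by
  obtain ⟨m, rfl⟩ : ∃ m', m = m' + 1 := ⟨m - 1, by omega⟩
  obtain ⟨a, rfl⟩ : ∃ a', a = a' + 1 := ⟨a - 1, by omega⟩
  obtain ⟨b, rfl⟩ : ∃ b', b = b' + 1 := ⟨b - 1, by omega⟩
  have hIcc : Finset.Icc 1 (m + 1) = Finset.Ico 1 (m + 2) := by
    ext x; simp; omega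
  rw [hIcc, Finset.sum_Ico_eq_sum_range]
  have hrange : m + 2 - 1 = m + 1 := by omega
  rw [hrange]
  have key : ∀ j ∈ Finset.range (m + 1),
      1 / (((Nat.factorial (1 + j - 1)) : ℝ) * ((Nat.factorial (a + 1 + (1 + j) - 1)) : ℝ)
            * ((Nat.factorial (m + 1 - (1 + j))) : ℝ) * ((Nat.factorial (m + 1 + (b + 1) - (1 + j))) : ℝ))
      = ((m.choose j * (a + b + m + 2).choose (b + m + 1 - j) : ℕ) : ℝ)
          / (((Nat.factorial m) : ℝ) * ((Nat.factorial (a + b + m + 2)) : ℝ)) := by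
    intro j hj
    rw [Finset.mem_range] at hj
    have hj' : j ≤ m := by omega
    have e1 : 1 + j - 1 = j := by omega
    have e2 : a + 1 + (1 + j) - 1 = a + j + 1 := by omega
    have e3 : m + 1 - (1 + j) = m - j := by omega
    have e4 : m + 1 + (b + 1) - (1 + j) = b + m + 1 - j := by omega
    rw [e1, e2, e3, e4]
    push_cast [Nat.cast_choose ℝ hj',
      Nat.cast_choose ℝ (show b + m + 1 - j ≤ a + b + m + 2 by omega)]
    have e5 : a + b + m + 2 - (b + m + 1 - j) = a + j + 1 := by omega
    rw [e5]
    have h1 : ((Nat.factorial j : ℝ)) ≠ 0 := by positivity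
    have h2 : ((Nat.factorial (a + j + 1) : ℝ)) ≠ 0 := by positivity
    have h3 : ((Nat.factorial (m - j) : ℝ)) ≠ 0 := by positivity
    have h4 : ((Nat.factorial (b + m + 1 - j) : ℝ)) ≠ 0 := by positivity
    have h5 : ((Nat.factorial m : ℝ)) ≠ 0 := by positivity
    have h6 : ((Nat.factorial (a + b + m + 2) : ℝ)) ≠ 0 := by positivity
    field_simp
  rw [Finset.sum_congr rfl key, ← Finset.sum_div, ← Nat.cast_sum]
  have hvand : ∑ j ∈ Finset.range (m + 1),
      m.choose j * (a + b + m + 2).choose (b + m + 1 - j)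
      = (m + (a + b + m + 2)).choose (b + m + 1) := vand m (a + b + m + 2) (b + m + 1) (by omega)
  rw [hvand]
  have e6 : m + (a + b + m + 2) = a + b + 2 * m + 2 := by omega
  have e7 : a + 1 + (b + 1) + 2 * (m + 1) - 2 = a + b + 2 * m + 2 := by omega
  have e8 : m + 1 - 1 = m := by omega
  have e9 : a + 1 + (m + 1) - 1 = a + m + 1 := by omega
  have e10 : b + 1 + (m + 1) - 1 = b + m + 1 := by omega
  have e11 : a + 1 + (b + 1) + (m + 1) - 1 = a + b + m + 2 := by omega
  rw [e6, e7, e8, e9, e10, e11,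
    Nat.cast_choose ℝ (show b + m + 1 ≤ a + b + 2 * m + 2 by omega)]
  have e12 : a + b + 2 * m + 2 - (b + m + 1) = a + m + 1 := by omega
  rw [e12]
  have h1 : ((Nat.factorial m : ℝ)) ≠ 0 := by positivity
  have h2 : ((Nat.factorial (a + m + 1) : ℝ)) ≠ 0 := by positivity
  have h3 : ((Nat.factorial (b + m + 1) : ℝ)) ≠ 0 := by positivity
  have h4 : ((Nat.factorial (a + b + m + 2) : ℝ)) ≠ 0 := by positivity
  rw [div_eq_div_iff (by positivity) (by positivity)]
  field_simp
end

section
/- Define Φ(c,d) = (c!/(c+d)!)·∑_{k=1}^c ((c+d−k)!/(c−k)!)·(1/k²) for positive integers c, d. Then for every fixed positive integer d, Φ(c,d) → π²/6 as c → ∞. -/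
open Filter Finset

noncomputable def Phi (c d : ℕ) : ℝ :=
  (((Nat.factorial c) : ℝ) / ((Nat.factorial (c + d)) : ℝ))
    * ∑ k ∈ Finset.Icc 1 c, (((Nat.factorial (c + d - k)) : ℝ) / ((Nat.factorial (c - k)) : ℝ)) * (1 / (k : ℝ) ^ 2)

/-- auxiliary product -/
def Aprod (d n : ℕ) : ℕ := ∏ i ∈ Finset.range d, (n + 1 + i)

lemma Aprod_pos (d n : ℕ) : 0 < Aprod d n :=
  Finset.prod_pos fun i _ => by positivity

lemma fact_eq (n : ℕ) : ∀ d, Nat.factorial (n + d) = Nat.factorial n * Aprod d n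
  | 0 => by simp [Aprod]
  | d + 1 => by
    rw [Aprod, Finset.prod_range_succ, ← Nat.add_assoc, Nat.factorial_succ, fact_eq n d, Aprod]
    ring

lemma Aprod_mono (d : ℕ) {m n : ℕ} (h : m ≤ n) : Aprod d m ≤ Aprod d n :=
  Finset.prod_le_prod' fun i _ => by omega

/-- the summand, extended by zero -/
noncomputable def F (d c k : ℕ) : ℝ :=
  if 1 ≤ k ∧ k ≤ c then ((Aprod d (c - k) : ℝ) / (Aprod d c : ℝ)) / (k : ℝ) ^ 2 else 0

lemma ratio_tendsto (a b : ℝ) :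
    Tendsto (fun c : ℕ => ((c : ℝ) + a) / ((c : ℝ) + b)) atTop (nhds 1) := by
  have hb : Tendsto (fun c : ℕ => (c : ℝ) + b) atTop atTop :=
    tendsto_atTop_add_const_right _ b tendsto_natCast_atTop_atTop
  have h0 : Tendsto (fun c : ℕ => (a - b) / ((c : ℝ) + b)) atTop (nhds 0) :=
    Tendsto.div_atTop tendsto_const_nhds hb
  have h1 : Tendsto (fun c : ℕ => 1 + (a - b) / ((c : ℝ) + b)) atTop (nhds 1) := by
    simpa using h0.const_add 1
  refine h1.congr' ?_
  filter_upwards [hb.eventually_gt_atTop 0] with c hc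
  field_simp
  ring

lemma F_tendsto (d k : ℕ) (hk : 1 ≤ k) :
    Tendsto (fun c : ℕ => F d c k) atTop (nhds ((1 : ℝ) / (k : ℝ) ^ 2)) := by
  have hprod : Tendsto (fun c : ℕ =>
      ∏ i ∈ Finset.range d, (((c : ℝ) + ((1 : ℝ) + i - k)) / ((c : ℝ) + ((1 : ℝ) + i))))
      atTop (nhds 1) := by
    have := tendsto_finset_prod (Finset.range d)
      (fun i _ => ratio_tendsto ((1 : ℝ) + i - k) ((1 : ℝ) + i))
    simpa using this
  have h2 : Tendsto (fun c : ℕ => F d c k) atTop (nhds ((1 : ℝ) / (k : ℝ) ^ 2)) := by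
    refine Tendsto.congr' ?_ (hprod.div_const ((k : ℝ) ^ 2))
    filter_upwards [eventually_ge_atTop k] with c hc
    rw [F, if_pos ⟨hk, hc⟩, Aprod, Aprod]
    push_cast
    rw [Finset.prod_div_distrib]
    congr 2
    · refine Finset.prod_congr rfl fun i _ => ?_
      rw [Nat.cast_sub hc]
      ring
    · exact Finset.prod_congr rfl fun i _ => by ring
  exact h2
  
lemma F_eq_sum (d c : ℕ) : Phi c d = ∑' k, F d c k := by
  rw [tsum_eq_sum (s := Finset.Icc 1 c) (by
    intro k hk
    rw [F, if_neg]
    simpa [Finset.mem_Icc] using hk)]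
  rw [Phi, Finset.mul_sum]
  refine Finset.sum_congr rfl fun k hk => ?_
  rw [Finset.mem_Icc] at hk
  rw [F, if_pos hk]
  have h1 : Nat.factorial (c + d) = Nat.factorial c * Aprod d c := fact_eq c d
  have h2 : Nat.factorial (c + d - k) = Nat.factorial (c - k) * Aprod d (c - k) := by
    have : c + d - k = (c - k) + d := by omega
    rw [this, fact_eq]
  rw [h1, h2]
  have hA := (Aprod_pos d c)
  have hA2 := (Aprod_pos d (c - k))
  have hf := Nat.factorial_pos c
  have hf2 := Nat.factorial_pos (c - k)
  have hk0 : (0:ℝ) < (k:ℝ) := by exact_mod_cast hk.1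
  push_cast
  field_simp

theorem stmt18 (d : ℕ) (hd : 0 < d) :
    Filter.Tendsto (fun c : ℕ => Phi c d) Filter.atTop
      (nhds (Real.pi ^ 2 / 6)) := by
  have hsum : Summable (fun k : ℕ => (1 : ℝ) / (k : ℝ) ^ 2) :=
    hasSum_zeta_two.summable
  have htsum : ∑' k : ℕ, (1 : ℝ) / (k : ℝ) ^ 2 = Real.pi ^ 2 / 6 :=
    hasSum_zeta_two.tsum_eq
  have key : Tendsto (fun c : ℕ => ∑' k, F d c k) atTop
      (nhds (∑' k : ℕ, (1 : ℝ) / (k : ℝ) ^ 2)) := by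
    refine tendsto_tsum_of_dominated_convergence hsum ?_ ?_
    · intro k
      rcases Nat.eq_zero_or_pos k with rfl | hk
      · simpa [F] using tendsto_const_nhds
      · exact F_tendsto d k hk
    · filter_upwards with c k
      rw [F]
      split_ifs with h
      · rw [Real.norm_eq_abs, abs_of_nonneg (by positivity)]
        have hk0 : (0:ℝ) < (k:ℝ) := by exact_mod_cast h.1
        have h1 : ((Aprod d (c - k) : ℝ) / (Aprod d c : ℝ)) ≤ 1 := by
          rw [div_le_one (by exact_mod_cast Aprod_pos d c)]
          exact_mod_cast Aprod_mono d (Nat.sub_le c k)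
        gcongr
      · simp only [norm_zero]
        positivity
  rw [← htsum]
  exact key.congr fun c => (F_eq_sum d c).symm
end
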